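/- The map φ sending a 3PGQ p = a₀+a₁e₁+a₂e₂+a₃e₃ to the 4×4 real matrix with rows (a₀, −λ₁λ₂a₁, −λ₁λ₃a₂, −λ₂λ₃a₃), (a₁, a₀, −λ₃a₃, λ₃a₂), (a₂, λ₂a₃, a₀, −λ₂a₁), (a₃, −λ₁a₂, λ₁a₁, a₀) is an injective ring homomorphism from the 3PGQ algebra into M₄(ℝ). -/
import Mathlib


def qmul (l1 l2 l3 : ℝ) (p q : ℝ × ℝ × ℝ × ℝ) : ℝ × ℝ × ℝ × ℝ :=
  (p.1*q.1 - l1*l2*p.2.1*q.2.1 - l1*l3*p.2.2.1*q.2.2.1 - l2*l3*p.2.2.2*q.2.2.2,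
   p.1*q.2.1 + p.2.1*q.1 + l3*(p.2.2.1*q.2.2.2 - p.2.2.2*q.2.2.1),
   p.1*q.2.2.1 + p.2.2.1*q.1 + l2*(p.2.2.2*q.2.1 - p.2.1*q.2.2.2),
   p.1*q.2.2.2 + p.2.2.2*q.1 + l1*(p.2.1*q.2.2.1 - p.2.2.1*q.2.1))

def fundM (l1 l2 l3 : ℝ) (p : ℝ × ℝ × ℝ × ℝ) : Matrix (Fin 4) (Fin 4) ℝ :=
  !![p.1, -l1*l2*p.2.1, -l1*l3*p.2.2.1, -l2*l3*p.2.2.2;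
     p.2.1, p.1, -l3*p.2.2.2, l3*p.2.2.1;
     p.2.2.1, l2*p.2.2.2, p.1, -l2*p.2.1;
     p.2.2.2, -l1*p.2.2.1, l1*p.2.1, p.1]

theorem fundM_ring_hom (l1 l2 l3 : ℝ) :
    (∀ p q : ℝ × ℝ × ℝ × ℝ,
        fundM l1 l2 l3 (p + q) = fundM l1 l2 l3 p + fundM l1 l2 l3 q) ∧
    (∀ p q : ℝ × ℝ × ℝ × ℝ,
        fundM l1 l2 l3 (qmul l1 l2 l3 p q) = fundM l1 l2 l3 p * fundM l1 l2 l3 q) ∧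
    fundM l1 l2 l3 (1, 0, 0, 0) = 1 ∧
    Function.Injective (fundM l1 l2 l3) := by
  refine ⟨?_, ?_, ?_, ?_⟩
  · intro p q
    simp only [fundM, Prod.fst_add, Prod.snd_add]
    ext i j
    fin_cases i <;> fin_cases j <;> simp [Matrix.add_apply] <;> ring
  · intro p q
    simp only [fundM, qmul]
    ext i j
    fin_cases i <;> fin_cases j <;>
      simp [Matrix.mul_apply, Fin.sum_univ_four] <;> ring
  · simp only [fundM]
    ext i j
    fin_cases i <;> fin_cases j <;> simp [Matrix.one_apply, Matrix.vecHead, Matrix.vecTail]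
  · intro p q h
    have h0 := congrFun (congrFun h 0) 0
    have h1 := congrFun (congrFun h 1) 0
    have h2 := congrFun (congrFun h 2) 0
    have h3 := congrFun (congrFun h 3) 0
    simp [fundM] at h0 h1 h2 h3
    exact Prod.ext h0 (Prod.ext h1 (Prod.ext h2 h3))
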